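/- Let i ∈ V with p_i(0) ∈ (0,1), and suppose there exists T_i ∈ ℕ such that n_i^−(k) > n_i^+(k) for all k ≥ T_i. Then there exists k* ≥ T_i such that q_i(k) = 0 for all k ≥ k*. -/

import Mathlib

set_option maxHeartbeats 1600000 in
/-- CODA model: if from some time `T_i` on, `n_i^-(k) > n_i^+(k)` always holds, then
agent `i` eventually adopts action `0` forever. -/
theorem stmt_11
    (n : ℕ) (N : Fin n → Finset (Fin n))
    (hdeg : ∀ i, 1 ≤ (N i).card)
    (p : Fin n → ℕ → ℝ) (q : Fin n → ℕ → ℕ)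
    (hq0 : ∀ i k, (p i k < 1 / 2 ∨ (p i k = 1 / 2 ∧ p i (k - 1) < 1 / 2)) → q i k = 0)
    (hq1 : ∀ i k, ¬(p i k < 1 / 2 ∨ (p i k = 1 / 2 ∧ p i (k - 1) < 1 / 2)) → q i k = 1)
    (hupd : ∀ i k, p i (k + 1) =
      p i k + p i k * (1 - p i k) / (N i).card * ∑ j ∈ N i, ((q j k : ℝ) - p i k))
    (i : Fin n) (hp0 : p i 0 ∈ Set.Ioo (0 : ℝ) 1)
    (T : ℕ)
    (hmaj : ∀ k ≥ T, ((N i).filter fun j => q j k = 1).card <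
      (N i).card - ((N i).filter fun j => q j k = 1).card) :
    ∃ kstar : ℕ, T ≤ kstar ∧ ∀ k ≥ kstar, q i k = 0 := by
  obtain ⟨hp0l, hp0r⟩ := hp0
  set m : ℕ := (N i).card with hm
  have hmpos : (0:ℝ) < (m:ℝ) := by
    have := hdeg i
    exact_mod_cast Nat.lt_of_lt_of_le Nat.zero_lt_one this
  -- q takes values 0 or 1
  have hq01 : ∀ j k, q j k = 0 ∨ q j k = 1 := by
    intro j k
    by_cases h : (p j k < 1 / 2 ∨ (p j k = 1 / 2 ∧ p j (k - 1) < 1 / 2))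
    · exact Or.inl (hq0 j k h)
    · exact Or.inr (hq1 j k h)
  set r : ℕ → ℝ := fun k => (((N i).filter fun j => q j k = 1).card : ℝ) / m with hr
  -- sum formula
  have hsum : ∀ k, (∑ j ∈ N i, (q j k : ℝ)) = (((N i).filter fun j => q j k = 1).card : ℝ) := by
    intro k
    have : ∀ j ∈ N i, (q j k : ℝ) = if q j k = 1 then 1 else 0 := by
      intro j _
      rcases hq01 j k with h | h <;> simp [h]
    rw [Finset.sum_congr rfl this, Finset.sum_boole]
  -- recurrence in terms of r
  have hrec : ∀ k, p i (k+1) = p i k + p i k * (1 - p i k) * (r k - p i k) := by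
    intro k
    have h := hupd i k
    rw [Finset.sum_sub_distrib, hsum k, Finset.sum_const, nsmul_eq_mul] at h
    rw [h, hr]
    have hm0 : (m:ℝ) ≠ 0 := ne_of_gt hmpos
    rw [← hm]
    field_simp
  have hr0 : ∀ k, 0 ≤ r k := by
    intro k
    exact div_nonneg (Nat.cast_nonneg _) (le_of_lt hmpos)
  have hr1 : ∀ k, r k ≤ 1 := by
    intro k
    rw [hr]
    rw [div_le_one hmpos]
    exact_mod_cast Finset.card_filter_le _ _
  -- p stays in (0,1)
  have hbnd : ∀ k, 0 < p i k ∧ p i k < 1 := by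
    intro k
    induction k with
    | zero => exact ⟨hp0l, hp0r⟩
    | succ k ih =>
      obtain ⟨h0, h1⟩ := ih
      rw [hrec k]
      constructor
      · nlinarith [hr0 k, hr1 k, mul_nonneg (mul_nonneg h0.le (by linarith : (0:ℝ) ≤ 1 - p i k)) (hr0 k), mul_pos h0 h0, mul_pos (mul_pos h0 h0) h0]
      · nlinarith [hr0 k, hr1 k, mul_nonneg (mul_nonneg (by linarith : (0:ℝ) ≤ 1 - p i k) h0.le) (by linarith [hr1 k] : (0:ℝ) ≤ 1 - r k), mul_pos (by linarith : (0:ℝ) < 1 - p i k) h0]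
  -- majority bound
  have hrkey : ∀ k ≥ T, 2 * (m:ℝ) * r k + 1 ≤ (m:ℝ) := by
    intro k hk
    have h1 := hmaj k hk
    have h2 : ((N i).filter fun j => q j k = 1).card ≤ m := Finset.card_filter_le _ _
    have h3 : 2 * ((N i).filter fun j => q j k = 1).card + 1 ≤ m := by omega
    have h3' : (2 * (((N i).filter fun j => q j k = 1).card : ℝ) + 1) ≤ (m:ℝ) := by
      exact_mod_cast h3
    have hmr : (m:ℝ) * r k = (((N i).filter fun j => q j k = 1).card : ℝ) := by
      rw [hr]
      field_simp
    nlinarith [hmr, h3']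
  have hrhalf : ∀ k ≥ T, r k ≤ 1/2 := by
    intro k hk
    nlinarith [hrkey k hk, hmpos]
  -- there exists k0 ≥ T with p i k0 < 1/2
  have hex : ∃ k0, T ≤ k0 ∧ p i k0 < 1/2 := by
    by_contra hcon
    push_neg at hcon
    have hcon' : ∀ k ≥ T, 1/2 ≤ p i k := fun k hk => hcon k hk
    set δ : ℝ := (1 - p i T) / (4 * m) with hδ
    have hδpos : 0 < δ := by
      apply div_pos
      · linarith [(hbnd T).2]
      · linarith
    have hδm : δ * (4 * m) = 1 - p i T := by
      rw [hδ]
      field_simp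
    have hdec : ∀ d : ℕ, p i (T + d) ≤ p i T - d * δ := by
      intro d
      induction d with
      | zero => simp
      | succ d ih =>
        have hk : T ≤ T + d := Nat.le_add_right _ _
        have h12 : 1/2 ≤ p i (T + d) := hcon' _ hk
        obtain ⟨hpos, hlt1⟩ := hbnd (T + d)
        have hle : p i (T + d) ≤ p i T := by
          have : 0 ≤ (d:ℝ) * δ := mul_nonneg (Nat.cast_nonneg _) (le_of_lt hδpos)
          linarith
        have h1 : (m:ℝ) * (r (T + d) - p i (T + d)) ≤ -(1/2) := by
          nlinarith [hrkey (T + d) hk]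
        have h2 : 1/2 * (1 - p i T) ≤ p i (T + d) * (1 - p i (T + d)) := by
          nlinarith
        have h3 : (m:ℝ) * (p i (T + d) * (1 - p i (T + d)) * (r (T + d) - p i (T + d)))
            ≤ -((1 - p i T) / 4) := by
          nlinarith [h1, h2, mul_nonneg (le_of_lt hpos) (by linarith : (0:ℝ) ≤ 1 - p i (T + d))]
        have hδm2 : δ * (m:ℝ) = (1 - p i T) / 4 := by linarith [hδm]
        have h4 : p i (T + d) * (1 - p i (T + d)) * (r (T + d) - p i (T + d)) ≤ -δ := by
          have hx : p i (T + d) * (1 - p i (T + d)) * (r (T + d) - p i (T + d)) * (m:ℝ)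
              ≤ (-δ) * (m:ℝ) := by nlinarith [h3, hδm2]
          exact le_of_mul_le_mul_right hx hmpos
        have : p i (T + d + 1) ≤ p i (T + d) - δ := by
          rw [hrec (T + d)]
          linarith
        push_cast
        have : T + (d + 1) = T + d + 1 := by ring
        rw [this]
        linarith [ih]
    obtain ⟨d, hd⟩ := exists_nat_gt ((p i T - 1/2) / δ)
    have hd' : p i T - 1/2 < d * δ := by
      rw [div_lt_iff₀ hδpos] at hd
      linarith
    have := hdec d
    have := hcon' (T + d) (Nat.le_add_right _ _)
    linarith
  obtain ⟨k0, hk0T, hk0⟩ := hex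
  -- p stays below 1/2
  have hinv : ∀ k, k0 ≤ k → p i k < 1/2 := by
    intro k hk
    induction k, hk using Nat.le_induction with
    | base => exact hk0
    | succ k hk ih =>
      have hkT : T ≤ k := le_trans hk0T hk
      obtain ⟨hpos, hlt1⟩ := hbnd k
      have hrh := hrhalf k hkT
      rw [hrec k]
      have hA : p i k * (1 - p i k) * (r k - p i k) ≤ p i k * (1 - p i k) * (1/2 - p i k) :=
        mul_le_mul_of_nonneg_left (by linarith) (mul_nonneg hpos.le (by linarith))
      have hB : p i k + p i k * (1 - p i k) * (1/2 - p i k) < 1/2 := by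
        nlinarith [sq_nonneg (p i k - 1/2), ih]
      linarith
  exact ⟨k0, hk0T, fun k hk => hq0 i k (Or.inl (hinv k hk))⟩
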